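/- Let F ∈ R^(l×m) with full row rank l over R = k[z₁,…,zₙ]. Then the quotient module of the row module of F by the ideal of all maximal minors equals the quotient by their gcd: ρ(F) : I_l(F) = ρ(F) : d_l(F), where I_l(F) is the ideal generated by all l×l minors and d_l(F) is their gcd. -/

import Mathlib

open Matrix

/-- The set of `i × i` minors of a matrix. -/
def minorsSet {R : Type*} [CommRing R] {l m : ℕ} (F : Matrix (Fin l) (Fin m) R)
    (i : ℕ) : Set R :=
  {x | ∃ (ri : Fin i ↪ Fin l) (ci : Fin i ↪ Fin m), x = (F.submatrix ri ci).det}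

/-- `d` is a greatest common divisor of the `i × i` minors of `F`. -/
def IsGcdOfMinors {R : Type*} [CommRing R] {l m : ℕ} (F : Matrix (Fin l) (Fin m) R)
    (i : ℕ) (d : R) : Prop :=
  (∀ x ∈ minorsSet F i, d ∣ x) ∧ ∀ c : R, (∀ x ∈ minorsSet F i, c ∣ x) → c ∣ d

/-- The row module `ρ(F)` of a matrix. -/
def rowSpan {R : Type*} [CommRing R] {l m : ℕ} (F : Matrix (Fin l) (Fin m) R) :
    Submodule R (Fin m → R) :=
  Submodule.span R (Set.range fun i : Fin l => F i)

lemma vecMul_eq_sum_smul_rows {R : Type*} [CommRing R] {l m : ℕ}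
    (F : Matrix (Fin l) (Fin m) R) (c : Fin l → R) :
    c ᵥ* F = ∑ i, c i • F i := by
  ext j
  simp [Matrix.vecMul, dotProduct, Finset.sum_apply]

lemma mem_rowSpan_iff {R : Type*} [CommRing R] {l m : ℕ}
    (F : Matrix (Fin l) (Fin m) R) (x : Fin m → R) :
    x ∈ rowSpan F ↔ ∃ c : Fin l → R, c ᵥ* F = x := by
  rw [rowSpan, Submodule.mem_span_range_iff_exists_fun]
  simp_rw [← vecMul_eq_sum_smul_rows]

set_option maxHeartbeats 2000000 in
set_option synthInstance.maxHeartbeats 400000 in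
/-- For `F ∈ R^(l×m)` of full row rank over `R = k[z₁,…,zₙ]`,
`ρ(F) : I_l(F) = ρ(F) : d_l(F)`, where `I_l(F)` is the ideal generated by all `l × l`
minors and `d_l(F)` is their gcd. -/
theorem quotient_by_minors_ideal_eq_quotient_by_gcd
    {k : Type*} [Field k] (n l m : ℕ) (hlm : l ≤ m)
    (F : Matrix (Fin l) (Fin m) (MvPolynomial (Fin n) k))
    (hrank : (F.map (algebraMap (MvPolynomial (Fin n) k)
      (FractionRing (MvPolynomial (Fin n) k)))).rank = l)
    (d : MvPolynomial (Fin n) k) (hd : IsGcdOfMinors F l d) :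
    {u : Fin m → MvPolynomial (Fin n) k |
        ∀ g ∈ Ideal.span (minorsSet F l), g • u ∈ rowSpan F} =
      {u : Fin m → MvPolynomial (Fin n) k | d • u ∈ rowSpan F} := by
  classical
  set f : MvPolynomial (Fin n) k →+* FractionRing (MvPolynomial (Fin n) k) :=
    algebraMap (MvPolynomial (Fin n) k) (FractionRing (MvPolynomial (Fin n) k)) with hfdef
  set K := FractionRing (MvPolynomial (Fin n) k) with hKdef
  have hf : Function.Injective f :=
    IsFractionRing.injective (MvPolynomial (Fin n) k) K
  set G : Matrix (Fin l) (Fin m) K := F.map f with hGdef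
  ext u
  simp only [Set.mem_setOf_eq]
  constructor
  · intro hu
    -- witnesses for each minor
    have hw : ∀ M ∈ minorsSet F l, ∃ w : Fin l → MvPolynomial (Fin n) k,
        w ᵥ* F = M • u := by
      intro M hM
      exact (mem_rowSpan_iff F _).mp (hu M (Ideal.subset_span hM))
    -- rows of G are linearly independent
    have hli : LinearIndependent K (fun i : Fin l => G i) := by
      rw [linearIndependent_iff_card_eq_finrank_span, Fintype.card_fin]
      have h1 := G.rank_eq_finrank_span_row
      rw [hrank] at h1
      exact h1
    have hinj : Function.Injective G.vecMul := Matrix.vecMul_injective_iff.mpr hli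
    -- existence of a nonzero maximal minor
    haveI : Module.Finite K (Fin l → K) := Module.Finite.pi
    have hspan : Submodule.span K (Set.range Gᵀ) = ⊤ := by
      apply Submodule.eq_top_of_finrank_eq
      rw [show Set.range Gᵀ = Set.range G.col from rfl, ← G.rank_eq_finrank_span_cols, hrank, Module.finrank_fintype_fun_eq_card,
        Fintype.card_fin]
    obtain ⟨b, hbsub, hbspan, hbli⟩ := exists_linearIndependent K (Set.range Gᵀ)
    rw [hspan] at hbspan
    have hbfin : b.Finite := (Set.finite_range Gᵀ).subset hbsub
    haveI := hbfin.fintype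
    let hbasis : Module.Basis b K (Fin l → K) :=
      Module.Basis.mk hbli (by rw [Subtype.range_coe]; exact hbspan.ge)
    have hcard : Fintype.card b = l := by
      have h2 := Module.finrank_eq_card_basis hbasis
      rw [Module.finrank_fintype_fun_eq_card, Fintype.card_fin] at h2
      omega
    let e : Fin l ≃ b := (Fintype.equivFinOfCardEq hcard).symm
    have hsel : ∀ x : b, ∃ j : Fin m, Gᵀ j = (x : Fin l → K) := fun x => hbsub x.2
    choose sel hsel' using hsel
    have hc0 : Function.Injective (fun i : Fin l => sel (e i)) := by
      intro i i' h
      have h' : sel (e i) = sel (e i') := h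
      have hvals : ((e i : Fin l → K)) = ((e i' : Fin l → K)) := by
        rw [← hsel' (e i), ← hsel' (e i'), h']
      exact e.injective (Subtype.ext hvals)
    set c0 : Fin l → Fin m := fun i => sel (e i) with hc0def
    set M0 : Matrix (Fin l) (Fin l) K := G.submatrix id c0 with hM0def
    have hM0cols : LinearIndependent K (fun i => M0ᵀ i) := by
      have hrw : (fun i => M0ᵀ i) = fun i => ((e i : Fin l → K)) := by
        funext i
        calc M0ᵀ i = Gᵀ (sel (e i)) := rfl
          _ = ((e i : Fin l → K)) := hsel' (e i)
      rw [hrw]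
      exact hbli.comp e e.injective
    have hM0det : M0.det ≠ 0 := by
      have := (Matrix.isUnit_iff_isUnit_det M0).mp
        (Matrix.linearIndependent_cols_iff_isUnit.mp hM0cols)
      exact this.ne_zero
    set ci : Fin l ↪ Fin m := ⟨c0, hc0⟩ with hcidef
    set ri : Fin l ↪ Fin l := Function.Embedding.refl _ with hridef
    set M0R : MvPolynomial (Fin n) k := (F.submatrix ri ci).det with hM0Rdef
    have hmem0 : M0R ∈ minorsSet F l := ⟨ri, ci, rfl⟩
    have hfM0 : f M0R = M0.det := by
      rw [hM0Rdef, RingHom.map_det]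
      congr 1
    have hM0R0 : f M0R ≠ 0 := by rw [hfM0]; exact hM0det
    -- solve over the fraction field
    obtain ⟨w0, hw0⟩ := hw M0R hmem0
    set v : Fin l → K := (f M0R)⁻¹ • (fun i => f (w0 i)) with hvdef
    have hcomp : ∀ (w : Fin l → MvPolynomial (Fin n) k),
        (fun i => f (w i)) ᵥ* G = fun j => f ((w ᵥ* F) j) := by
      intro w
      funext j
      rw [RingHom.map_vecMul f F w j]
      rfl
    have hvG : v ᵥ* G = fun j => f (u j) := by
      rw [hvdef, Matrix.smul_vecMul, hcomp w0, hw0]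
      funext j
      simp only [Pi.smul_apply, smul_eq_mul, _root_.map_mul]
      exact inv_mul_cancel_left₀ hM0R0 _
    have hkey : ∀ M ∈ minorsSet F l, ∃ w : Fin l → MvPolynomial (Fin n) k,
        (fun i : Fin l => f M * v i) = fun i => f (w i) := by
      intro M hM
      obtain ⟨w, hwM⟩ := hw M hM
      refine ⟨w, hinj (a₁ := fun i => f M * v i) (a₂ := fun i => f (w i)) ?_⟩
      show (fun i => f M * v i) ᵥ* G = (fun i => f (w i)) ᵥ* G
      have hsm : (fun i => f M * v i) = f M • v := by funext i; rfl
      rw [hsm, Matrix.smul_vecMul, hvG, hcomp w, hwM]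
      funext j
      simp only [Pi.smul_apply, smul_eq_mul, _root_.map_mul]
    -- each coordinate of d • v is integral
    have hdv : ∀ i : Fin l, ∃ t : MvPolynomial (Fin n) k, f d * v i = f t := by
      intro i
      obtain ⟨a, bb, hbb, hab⟩ := IsFractionRing.div_surjective
        (A := MvPolynomial (Fin n) k) (v i)
      have hbb0 : bb ≠ 0 := nonZeroDivisors.ne_zero hbb
      obtain ⟨a', b', c', hcop, ha', hb'⟩ :=
        UniqueFactorizationMonoid.exists_reduced_factors' a bb hbb0
      have hb'0 : b' ≠ 0 := by
        intro h; exact hbb0 (by rw [← hb', h, mul_zero])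
      have hc'0 : c' ≠ 0 := by
        intro h; exact hbb0 (by rw [← hb', h, zero_mul])
      have hfb' : f b' ≠ 0 := fun h => hb'0 (hf (by simpa using h))
      have hfc' : f c' ≠ 0 := fun h => hc'0 (hf (by simpa using h))
      have hvi : v i * f b' = f a' := by
        have hv' : v i = f a / f bb := hab.symm
        rw [hv', ← ha', ← hb', _root_.map_mul, _root_.map_mul]
        rw [mul_div_mul_left _ _ hfc']
        exact div_mul_cancel₀ _ hfb'
      -- b' divides every minor
      have hb'dvd : ∀ M ∈ minorsSet F l, b' ∣ M := by
        intro M hM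
        obtain ⟨w, hwM⟩ := hkey M hM
        have h1 : f M * v i = f (w i) := congrFun hwM i
        have h2 : f (M * a') = f (w i * b') := by
          rw [_root_.map_mul, _root_.map_mul, ← hvi, ← h1]; ring
        have h3 : M * a' = w i * b' := hf h2
        have h4 : b' ∣ a' * M := ⟨w i, by rw [mul_comm a' M, h3, mul_comm]⟩
        exact UniqueFactorizationMonoid.dvd_of_dvd_mul_right_of_no_prime_factors hb'0
          (fun hd1 hd2 hp => hp.not_unit (hcop hd2 hd1)) h4
      obtain ⟨c, hc⟩ := hd.2 b' hb'dvd
      refine ⟨c * a', ?_⟩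
      rw [hc, _root_.map_mul, _root_.map_mul]
      calc f b' * f c * v i = f c * (v i * f b') := by ring
        _ = f c * f a' := by rw [hvi]
    choose t ht using hdv
    -- conclude
    have hfinal : (fun j => f ((t ᵥ* F) j)) = fun j => f ((d • u) j) := by
      rw [← hcomp t]
      have h1 : (fun i => f (t i)) = f d • v := by
        funext i; rw [← ht i]; rfl
      rw [h1, Matrix.smul_vecMul, hvG]
      funext j
      simp only [Pi.smul_apply, smul_eq_mul, _root_.map_mul]
    have hfin2 : t ᵥ* F = d • u := by
      funext j
      exact hf (congrFun hfinal j)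
    exact (mem_rowSpan_iff F _).mpr ⟨t, hfin2⟩
  · intro hu g hg
    have hle : Ideal.span (minorsSet F l) ≤
        (rowSpan F).comap
          (LinearMap.toSpanSingleton (MvPolynomial (Fin n) k) (Fin m → MvPolynomial (Fin n) k) u) := by
      rw [Ideal.span_le]
      intro M hM
      obtain ⟨e, he⟩ := hd.1 M hM
      simp only [SetLike.mem_coe, Submodule.mem_comap, LinearMap.toSpanSingleton_apply]
      have hMe : M • u = e • (d • u) := by rw [he, mul_comm, mul_smul]
      rw [hMe]
      exact (rowSpan F).smul_mem e hu
    have := hle hg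
    simpa only [Submodule.mem_comap, LinearMap.toSpanSingleton_apply] using this
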